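/- For any four discrete random variables X₁, X₂, X₃, X₄ (on a finite probability space): 2·I(X₃;X₄) ≤ I(X₁;X₂) + I(X₁;X₃,X₄) + 3·I(X₃;X₄|X₁) + I(X₃;X₄|X₂). -/

import Mathlib

/-- Shannon entropy of a discrete random variable `X : Ω → S` on a finite sample
space with probability mass function `p`. -/
noncomputable def shannonEntropy {Ω S : Type*} [Fintype Ω] [Fintype S] [DecidableEq S]
    (p : Ω → ℝ) (X : Ω → S) : ℝ :=
  ∑ s : S, Real.negMulLog (∑ ω : Ω, if X ω = s then p ω else 0)

section
variable {Ω S₁ S₂ S₃ S₄ : Type*} [Fintype Ω] [Fintype S₁] [Fintype S₂] [Fintype S₃] [Fintype S₄]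
  [DecidableEq S₁] [DecidableEq S₂] [DecidableEq S₃] [DecidableEq S₄]

/-- Mutual information `I(X;Y) = H(X) + H(Y) - H(X,Y)`. -/
noncomputable def mutualInfo (p : Ω → ℝ) (X : Ω → S₁) (Y : Ω → S₂) : ℝ :=
  shannonEntropy p X + shannonEntropy p Y - shannonEntropy p (fun ω => (X ω, Y ω))

/-- Conditional mutual information `I(X;Y|Z) = H(X,Z) + H(Y,Z) - H(X,Y,Z) - H(Z)`. -/
noncomputable def condMutualInfo (p : Ω → ℝ) (X : Ω → S₁) (Y : Ω → S₂) (Z : Ω → S₃) : ℝ :=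
  shannonEntropy p (fun ω => (X ω, Z ω)) + shannonEntropy p (fun ω => (Y ω, Z ω))
    - shannonEntropy p (fun ω => (X ω, Y ω, Z ω)) - shannonEntropy p Z

end


open Finset Real

section ZYAux

variable {Ω : Type*} [Fintype Ω]

/-- probability of the event `X = s` -/
noncomputable def zyPr {S : Type*} [DecidableEq S] (p : Ω → ℝ) (X : Ω → S) (s : S) : ℝ :=
  ∑ ω : Ω, if X ω = s then p ω else 0

theorem zyPr_nonneg {S : Type*} [DecidableEq S] {p : Ω → ℝ} (hp : ∀ ω, 0 ≤ p ω)
    (X : Ω → S) (s : S) : 0 ≤ zyPr p X s :=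
  Finset.sum_nonneg fun ω _ => by split <;> simp [hp ω]

theorem zyPr_le {S T : Type*} [DecidableEq S] [DecidableEq T] {p : Ω → ℝ} (hp : ∀ ω, 0 ≤ p ω)
    {X : Ω → S} {Y : Ω → T} {s : S} {t : T} (h : ∀ ω, X ω = s → Y ω = t) :
    zyPr p X s ≤ zyPr p Y t := by
  apply Finset.sum_le_sum
  intro ω _
  by_cases hx : X ω = s
  · simp [hx, h ω hx]
  · simp only [hx, if_false]
    split <;> simp [hp ω]

theorem zyPr_sum {S : Type*} [Fintype S] [DecidableEq S] (p : Ω → ℝ) (X : Ω → S) :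
    ∑ s : S, zyPr p X s = ∑ ω, p ω := by
  unfold zyPr
  rw [Finset.sum_comm]
  refine Finset.sum_congr rfl fun ω _ => ?_
  rw [Finset.sum_ite_eq Finset.univ (X ω) (fun _ => p ω)]
  simp

/-- pushforward sums -/
theorem zyPr_mul_sum {S : Type*} [Fintype S] [DecidableEq S] (p : Ω → ℝ) (X : Ω → S)
    (φ : S → ℝ) : ∑ s : S, zyPr p X s * φ s = ∑ ω, p ω * φ (X ω) := by
  unfold zyPr
  simp only [Finset.sum_mul]
  rw [Finset.sum_comm]
  refine Finset.sum_congr rfl fun ω _ => ?_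
  rw [show (fun s => (if X ω = s then p ω else 0) * φ s)
      = fun s => (if X ω = s then p ω * φ s else 0) from funext fun s => by split <;> simp]
  rw [Finset.sum_ite_eq Finset.univ (X ω) (fun s => p ω * φ s)]
  simp

theorem zyPr_eq_sum_fiber {S T : Type*} [Fintype S] [DecidableEq S] [DecidableEq T]
    (p : Ω → ℝ) (X : Ω → S) (g : S → T) (t : T) :
    zyPr p (fun ω => g (X ω)) t = ∑ s : S, if g s = t then zyPr p X s else 0 := by
  unfold zyPr
  rw [Finset.sum_congr rfl (fun s (_ : s ∈ Finset.univ) => show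
      (if g s = t then ∑ ω : Ω, if X ω = s then p ω else 0 else 0)
        = ∑ ω : Ω, (if X ω = s then (if g s = t then p ω else 0) else 0) from by
    split <;> simp)]
  rw [Finset.sum_comm]
  refine Finset.sum_congr rfl fun ω _ => ?_
  rw [show (fun s => if X ω = s then (if g s = t then p ω else 0) else 0)
      = fun s => if X ω = s then (if g (X ω) = t then p ω else 0) else 0 from
    funext fun s => by by_cases h : X ω = s <;> simp [h]]
  rw [Finset.sum_ite_eq Finset.univ (X ω)]
  simp

theorem zyPr_marg_mid {S₁ S₂ S₃ : Type*} [Fintype S₂]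
    [DecidableEq S₁] [DecidableEq S₂] [DecidableEq S₃]
    (p : Ω → ℝ) (X : Ω → S₁) (Y : Ω → S₂) (Z : Ω → S₃) (x : S₁) (z : S₃) :
    ∑ y : S₂, zyPr p (fun ω => (X ω, Y ω, Z ω)) (x, y, z)
      = zyPr p (fun ω => (X ω, Z ω)) (x, z) := by
  unfold zyPr
  rw [Finset.sum_comm]
  refine Finset.sum_congr rfl fun ω _ => ?_
  rw [show (fun y => if (X ω, Y ω, Z ω) = (x, y, z) then p ω else 0)
      = fun y => if Y ω = y then (if (X ω, Z ω) = (x, z) then p ω else 0) else 0 from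
    funext fun y => by by_cases h : Y ω = y <;> simp [h, Prod.ext_iff] <;> tauto]
  rw [Finset.sum_ite_eq Finset.univ (Y ω)]
  simp

theorem zyPr_marg_fst3 {S₁ S₂ S₃ : Type*} [Fintype S₁]
    [DecidableEq S₁] [DecidableEq S₂] [DecidableEq S₃]
    (p : Ω → ℝ) (X : Ω → S₁) (Y : Ω → S₂) (Z : Ω → S₃) (y : S₂) (z : S₃) :
    ∑ x : S₁, zyPr p (fun ω => (X ω, Y ω, Z ω)) (x, y, z)
      = zyPr p (fun ω => (Y ω, Z ω)) (y, z) := by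
  unfold zyPr
  rw [Finset.sum_comm]
  refine Finset.sum_congr rfl fun ω _ => ?_
  rw [show (fun x => if (X ω, Y ω, Z ω) = (x, y, z) then p ω else 0)
      = fun x => if X ω = x then (if (Y ω, Z ω) = (y, z) then p ω else 0) else 0 from
    funext fun x => by by_cases h : X ω = x <;> simp [h, Prod.ext_iff] <;> tauto]
  rw [Finset.sum_ite_eq Finset.univ (X ω)]
  simp

theorem zyPr_marg_fst2 {S₁ S₃ : Type*} [Fintype S₁] [DecidableEq S₁] [DecidableEq S₃]
    (p : Ω → ℝ) (X : Ω → S₁) (Z : Ω → S₃) (z : S₃) :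
    ∑ x : S₁, zyPr p (fun ω => (X ω, Z ω)) (x, z) = zyPr p Z z := by
  unfold zyPr
  rw [Finset.sum_comm]
  refine Finset.sum_congr rfl fun ω _ => ?_
  rw [show (fun x => if (X ω, Z ω) = (x, z) then p ω else 0)
      = fun x => if X ω = x then (if Z ω = z then p ω else 0) else 0 from
    funext fun x => by by_cases h : X ω = x <;> simp [h, Prod.ext_iff] <;> tauto]
  rw [Finset.sum_ite_eq Finset.univ (X ω)]
  simp

theorem zyEntropy_eq {S : Type*} [Fintype S] [DecidableEq S] (p : Ω → ℝ) (X : Ω → S) :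
    shannonEntropy p X = ∑ s : S, Real.negMulLog (zyPr p X s) := rfl

theorem zyEntropy_congr {Ω' S : Type*} [Fintype Ω'] [Fintype S] [DecidableEq S]
    {p : Ω → ℝ} {q : Ω' → ℝ} {X : Ω → S} {Y : Ω' → S}
    (h : ∀ s, zyPr p X s = zyPr q Y s) : shannonEntropy p X = shannonEntropy q Y := by
  rw [zyEntropy_eq, zyEntropy_eq]
  exact Finset.sum_congr rfl fun s _ => by rw [h]

theorem zyEntropy_comp_inj {S T : Type*} [Fintype S] [DecidableEq S] [Fintype T] [DecidableEq T]
    (p : Ω → ℝ) (X : Ω → S) (e : S → T) (he : Function.Injective e) :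
    shannonEntropy p (fun ω => e (X ω)) = shannonEntropy p X := by
  rw [zyEntropy_eq, zyEntropy_eq]
  rw [← Finset.sum_subset (Finset.subset_univ (Finset.univ.image e)) (fun t _ ht => by
    have h0 : zyPr p (fun ω => e (X ω)) t = 0 := Finset.sum_eq_zero fun ω _ =>
      if_neg (fun h => ht (Finset.mem_image.2 ⟨X ω, Finset.mem_univ _, h⟩))
    rw [h0, Real.negMulLog_zero])]
  rw [Finset.sum_image (fun a _ b _ h => he h)]
  refine Finset.sum_congr rfl fun s _ => ?_
  congr 1
  exact Finset.sum_congr rfl fun ω _ => by simp [he.eq_iff]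

theorem zyCMI_rep {S₁ S₂ S₃ : Type*} [Fintype S₁] [Fintype S₂] [Fintype S₃]
    [DecidableEq S₁] [DecidableEq S₂] [DecidableEq S₃]
    (p : Ω → ℝ) (X : Ω → S₁) (Y : Ω → S₂) (Z : Ω → S₃) :
    condMutualInfo p X Y Z = ∑ x : S₁, ∑ y : S₂, ∑ z : S₃,
      zyPr p (fun ω => (X ω, Y ω, Z ω)) (x, y, z) *
        (Real.log (zyPr p (fun ω => (X ω, Y ω, Z ω)) (x, y, z))
          + Real.log (zyPr p Z z)
          - Real.log (zyPr p (fun ω => (X ω, Z ω)) (x, z))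
          - Real.log (zyPr p (fun ω => (Y ω, Z ω)) (y, z))) := by
  have EA : shannonEntropy p (fun ω => (X ω, Y ω, Z ω)) = -∑ x : S₁, ∑ y : S₂, ∑ z : S₃,
      zyPr p (fun ω => (X ω, Y ω, Z ω)) (x, y, z) *
        Real.log (zyPr p (fun ω => (X ω, Y ω, Z ω)) (x, y, z)) := by
    rw [zyEntropy_eq, Fintype.sum_prod_type]
    simp [Fintype.sum_prod_type, Real.negMulLog, Finset.sum_neg_distrib]
  have EB : shannonEntropy p (fun ω => (X ω, Z ω)) = -∑ x : S₁, ∑ y : S₂, ∑ z : S₃,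
      zyPr p (fun ω => (X ω, Y ω, Z ω)) (x, y, z) *
        Real.log (zyPr p (fun ω => (X ω, Z ω)) (x, z)) := by
    rw [zyEntropy_eq, Fintype.sum_prod_type, ← Finset.sum_neg_distrib]
    refine Finset.sum_congr rfl fun x _ => ?_
    rw [Finset.sum_comm, ← Finset.sum_neg_distrib]
    refine Finset.sum_congr rfl fun z _ => ?_
    simp only [Real.negMulLog, neg_mul, neg_inj]
    nth_rewrite 1 [← zyPr_marg_mid p X Y Z x z]
    rw [Finset.sum_mul]
  have ED : shannonEntropy p (fun ω => (Y ω, Z ω)) = -∑ x : S₁, ∑ y : S₂, ∑ z : S₃,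
      zyPr p (fun ω => (X ω, Y ω, Z ω)) (x, y, z) *
        Real.log (zyPr p (fun ω => (Y ω, Z ω)) (y, z)) := by
    rw [zyEntropy_eq, Fintype.sum_prod_type]
    rw [show ∑ x : S₁, ∑ y : S₂, ∑ z : S₃,
      zyPr p (fun ω => (X ω, Y ω, Z ω)) (x, y, z) *
        Real.log (zyPr p (fun ω => (Y ω, Z ω)) (y, z))
      = ∑ y : S₂, ∑ z : S₃, ∑ x : S₁, zyPr p (fun ω => (X ω, Y ω, Z ω)) (x, y, z) *
        Real.log (zyPr p (fun ω => (Y ω, Z ω)) (y, z)) from by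
      exact Finset.sum_comm.trans (Finset.sum_congr rfl fun y _ => Finset.sum_comm)]
    rw [← Finset.sum_neg_distrib]
    refine Finset.sum_congr rfl fun y _ => ?_
    rw [← Finset.sum_neg_distrib]
    refine Finset.sum_congr rfl fun z _ => ?_
    simp only [Real.negMulLog, neg_mul, neg_inj]
    nth_rewrite 1 [← zyPr_marg_fst3 p X Y Z y z]
    rw [Finset.sum_mul]
  have EC : shannonEntropy p Z = -∑ x : S₁, ∑ y : S₂, ∑ z : S₃,
      zyPr p (fun ω => (X ω, Y ω, Z ω)) (x, y, z) * Real.log (zyPr p Z z) := by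
    rw [zyEntropy_eq]
    rw [show ∑ x : S₁, ∑ y : S₂, ∑ z : S₃,
      zyPr p (fun ω => (X ω, Y ω, Z ω)) (x, y, z) * Real.log (zyPr p Z z)
      = ∑ z : S₃, ∑ x : S₁, ∑ y : S₂, zyPr p (fun ω => (X ω, Y ω, Z ω)) (x, y, z) *
          Real.log (zyPr p Z z) from by
      exact (Finset.sum_congr rfl fun x _ => Finset.sum_comm).trans Finset.sum_comm]
    rw [← Finset.sum_neg_distrib]
    refine Finset.sum_congr rfl fun z _ => ?_
    have hz : zyPr p Z z = ∑ x : S₁, ∑ y : S₂,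
        zyPr p (fun ω => (X ω, Y ω, Z ω)) (x, y, z) := by
      rw [← zyPr_marg_fst2 p X Z z]
      exact Finset.sum_congr rfl fun x _ => (zyPr_marg_mid p X Y Z x z).symm
    simp only [Real.negMulLog, neg_mul, neg_inj]
    nth_rewrite 1 [hz]
    rw [Finset.sum_mul]
    exact Finset.sum_congr rfl fun x _ => by rw [Finset.sum_mul]
  rw [condMutualInfo, EA, EB, EC, ED]
  simp only [mul_add, mul_sub, Finset.sum_add_distrib, Finset.sum_sub_distrib]
  ring

theorem zyKey {a b c d : ℝ} (ha : 0 ≤ a) (hb : 0 ≤ b) (hc : 0 ≤ c) (hd : 0 ≤ d)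
    (hab : a ≤ b) (hac : a ≤ c) (had : a ≤ d) :
    a - b * d / c ≤ a * (Real.log a + Real.log c - Real.log b - Real.log d) := by
  rcases eq_or_lt_of_le ha with h | h
  · rw [← h]
    simp only [zero_sub, mul_comm, mul_zero, zero_mul]
    have : 0 ≤ b * d / c := by positivity
    linarith
  · have hb' : 0 < b := lt_of_lt_of_le h hab
    have hc' : 0 < c := lt_of_lt_of_le h hac
    have hd' : 0 < d := lt_of_lt_of_le h had
    have hlog : Real.log (b * d / (a * c)) ≤ b * d / (a * c) - 1 :=
      Real.log_le_sub_one_of_pos (by positivity)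
    rw [Real.log_div (by positivity) (by positivity), Real.log_mul hb'.ne' hd'.ne',
      Real.log_mul h.ne' hc'.ne'] at hlog
    have hmul := mul_le_mul_of_nonneg_left hlog ha
    have hfs : a * (b * d / (a * c)) = b * d / c := by field_simp
    nlinarith [hmul, hfs]

theorem zyCMI_nonneg {S₁ S₂ S₃ : Type*} [Fintype S₁] [Fintype S₂] [Fintype S₃]
    [DecidableEq S₁] [DecidableEq S₂] [DecidableEq S₃]
    {p : Ω → ℝ} (hp : ∀ ω, 0 ≤ p ω) (X : Ω → S₁) (Y : Ω → S₂) (Z : Ω → S₃) :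
    0 ≤ condMutualInfo p X Y Z := by
  rw [zyCMI_rep]
  have hstep : ∑ x : S₁, ∑ y : S₂, ∑ z : S₃,
      (zyPr p (fun ω => (X ω, Y ω, Z ω)) (x, y, z)
        - zyPr p (fun ω => (X ω, Z ω)) (x, z) * zyPr p (fun ω => (Y ω, Z ω)) (y, z)
          / zyPr p Z z)
      ≤ ∑ x : S₁, ∑ y : S₂, ∑ z : S₃,
      zyPr p (fun ω => (X ω, Y ω, Z ω)) (x, y, z) *
        (Real.log (zyPr p (fun ω => (X ω, Y ω, Z ω)) (x, y, z))
          + Real.log (zyPr p Z z)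
          - Real.log (zyPr p (fun ω => (X ω, Z ω)) (x, z))
          - Real.log (zyPr p (fun ω => (Y ω, Z ω)) (y, z))) := by
    refine Finset.sum_le_sum fun x _ => Finset.sum_le_sum fun y _ => Finset.sum_le_sum
      fun z _ => ?_
    refine zyKey (zyPr_nonneg hp _ _) (zyPr_nonneg hp _ _) (zyPr_nonneg hp _ _)
      (zyPr_nonneg hp _ _) ?_ ?_ ?_
    · exact zyPr_le hp fun ω h => by
        simp only [Prod.mk.injEq] at h ⊢; exact ⟨h.1, h.2.2⟩
    · exact zyPr_le hp fun ω h => by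
        simp only [Prod.mk.injEq] at h; exact h.2.2
    · exact zyPr_le hp fun ω h => by
        simp only [Prod.mk.injEq] at h ⊢; exact ⟨h.2.1, h.2.2⟩
  have hsum1 : ∑ x : S₁, ∑ y : S₂, ∑ z : S₃,
      zyPr p (fun ω => (X ω, Y ω, Z ω)) (x, y, z) = ∑ ω, p ω := by
    rw [← zyPr_sum p (fun ω => (X ω, Y ω, Z ω))]
    rw [Fintype.sum_prod_type]
    exact Finset.sum_congr rfl fun x _ =>
      (Fintype.sum_prod_type (fun s : S₂ × S₃ => zyPr p (fun ω => (X ω, Y ω, Z ω)) (x, s))).symm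
  have hsum2 : ∑ x : S₁, ∑ y : S₂, ∑ z : S₃,
      zyPr p (fun ω => (X ω, Z ω)) (x, z) * zyPr p (fun ω => (Y ω, Z ω)) (y, z)
        / zyPr p Z z ≤ ∑ ω, p ω := by
    have e1 : ∀ x : S₁, ∀ z : S₃, ∑ y : S₂,
        zyPr p (fun ω => (X ω, Z ω)) (x, z) * zyPr p (fun ω => (Y ω, Z ω)) (y, z)
          / zyPr p Z z
        = zyPr p (fun ω => (X ω, Z ω)) (x, z) * (zyPr p Z z / zyPr p Z z) := by
      intro x z
      rw [← Finset.sum_div, ← Finset.mul_sum, zyPr_marg_fst2 p Y Z z, mul_div_assoc]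
    calc ∑ x : S₁, ∑ y : S₂, ∑ z : S₃,
        zyPr p (fun ω => (X ω, Z ω)) (x, z) * zyPr p (fun ω => (Y ω, Z ω)) (y, z)
          / zyPr p Z z
        = ∑ x : S₁, ∑ z : S₃, ∑ y : S₂,
        zyPr p (fun ω => (X ω, Z ω)) (x, z) * zyPr p (fun ω => (Y ω, Z ω)) (y, z)
          / zyPr p Z z := Finset.sum_congr rfl fun x _ => Finset.sum_comm
      _ = ∑ x : S₁, ∑ z : S₃,
          zyPr p (fun ω => (X ω, Z ω)) (x, z) * (zyPr p Z z / zyPr p Z z) :=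
        Finset.sum_congr rfl fun x _ => Finset.sum_congr rfl fun z _ => e1 x z
      _ = ∑ z : S₃, ∑ x : S₁,
          zyPr p (fun ω => (X ω, Z ω)) (x, z) * (zyPr p Z z / zyPr p Z z) := Finset.sum_comm
      _ = ∑ z : S₃, zyPr p Z z * (zyPr p Z z / zyPr p Z z) := by
        refine Finset.sum_congr rfl fun z _ => ?_
        rw [← Finset.sum_mul, zyPr_marg_fst2 p X Z z]
      _ ≤ ∑ z : S₃, zyPr p Z z := by
        refine Finset.sum_le_sum fun z _ => ?_
        rcases eq_or_ne (zyPr p Z z) 0 with h | h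
        · simp [h]
        · rw [div_self h, mul_one]
      _ = ∑ ω, p ω := zyPr_sum p Z
  have hsub : ∑ x : S₁, ∑ y : S₂, ∑ z : S₃,
      (zyPr p (fun ω => (X ω, Y ω, Z ω)) (x, y, z)
        - zyPr p (fun ω => (X ω, Z ω)) (x, z) * zyPr p (fun ω => (Y ω, Z ω)) (y, z)
          / zyPr p Z z)
      = (∑ x : S₁, ∑ y : S₂, ∑ z : S₃, zyPr p (fun ω => (X ω, Y ω, Z ω)) (x, y, z))
        - ∑ x : S₁, ∑ y : S₂, ∑ z : S₃,
          zyPr p (fun ω => (X ω, Z ω)) (x, z) * zyPr p (fun ω => (Y ω, Z ω)) (y, z)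
            / zyPr p Z z := by
    simp only [Finset.sum_sub_distrib]
  linarith

section zyQ
variable {V : Type*} [DecidableEq V]

noncomputable def zyQ (p : Ω → ℝ) (F : Ω → V) : Ω × Ω → ℝ :=
  fun w => if F w.2 = F w.1 then p w.1 * p w.2 / zyPr p F (F w.1) else 0

theorem zyQ_nonneg {p : Ω → ℝ} (hp : ∀ ω, 0 ≤ p ω) (F : Ω → V) :
    ∀ w, 0 ≤ zyQ p F w := fun w => by
  unfold zyQ
  split
  · exact div_nonneg (mul_nonneg (hp _) (hp _)) (zyPr_nonneg hp _ _)
  · exact le_refl 0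

theorem zyQ_symm (p : Ω → ℝ) (F : Ω → V) (a b : Ω) : zyQ p F (a, b) = zyQ p F (b, a) := by
  unfold zyQ
  dsimp only
  by_cases h : F b = F a
  · rw [if_pos h, if_pos h.symm, h, mul_comm]
  · rw [if_neg h, if_neg fun h' => h h'.symm]

theorem zyQ_marg {p : Ω → ℝ} (hp : ∀ ω, 0 ≤ p ω) (F : Ω → V) (a : Ω) :
    ∑ b, zyQ p F (a, b) = p a := by
  unfold zyQ
  dsimp only
  rw [Finset.sum_congr rfl (fun b (_ : b ∈ Finset.univ) => show
      (if F b = F a then p a * p b / zyPr p F (F a) else 0)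
        = p a / zyPr p F (F a) * (if F b = F a then p b else 0) from by
    split <;> ring)]
  rw [← Finset.mul_sum]
  have hz : ∑ b, (if F b = F a then p b else 0) = zyPr p F (F a) := rfl
  rw [hz]
  rcases eq_or_ne (zyPr p F (F a)) 0 with h | h
  · have hle : p a ≤ zyPr p F (F a) := by
      simpa [zyPr] using Finset.single_le_sum (f := fun ω => if F ω = F a then p ω else 0)
        (fun ω _ => by split <;> simp [hp ω]) (Finset.mem_univ a)
    have hpa : p a = 0 := le_antisymm (h ▸ hle) (hp a)
    rw [h, hpa]
    simp
  · rw [div_mul_cancel₀ _ h]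

theorem zyQ_sum {p : Ω → ℝ} (hp : ∀ ω, 0 ≤ p ω) (hp1 : ∑ ω, p ω = 1) (F : Ω → V) :
    ∑ w, zyQ p F w = 1 := by
  rw [Fintype.sum_prod_type]
  rw [Finset.sum_congr rfl fun a _ => zyQ_marg hp F a]
  exact hp1

theorem zyQ_pr_fst {T : Type*} [DecidableEq T] {p : Ω → ℝ} (hp : ∀ ω, 0 ≤ p ω) (F : Ω → V)
    (W : Ω → T) (t : T) : zyPr (zyQ p F) (fun w => W w.1) t = zyPr p W t := by
  unfold zyPr
  rw [Fintype.sum_prod_type]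
  refine Finset.sum_congr rfl fun a _ => ?_
  dsimp only
  by_cases h : W a = t
  · simp [h, zyQ_marg hp F a]
  · simp [h]

theorem zyQ_entropy_fst {T : Type*} [Fintype T] [DecidableEq T] {p : Ω → ℝ}
    (hp : ∀ ω, 0 ≤ p ω) (F : Ω → V) (W : Ω → T) :
    shannonEntropy (zyQ p F) (fun w => W w.1) = shannonEntropy p W :=
  (zyEntropy_congr fun t => (zyQ_pr_fst hp F W t).symm).symm

theorem zyQ_entropy_swap {T : Type*} [Fintype T] [DecidableEq T] (p : Ω → ℝ) (F : Ω → V)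
    (Vf : Ω × Ω → T) :
    shannonEntropy (zyQ p F) (fun w => Vf (w.2, w.1)) = shannonEntropy (zyQ p F) Vf := by
  refine zyEntropy_congr fun t => ?_
  unfold zyPr
  refine Fintype.sum_equiv (Equiv.prodComm Ω Ω) _ _ fun w => ?_
  rcases w with ⟨a, b⟩
  dsimp [Equiv.prodComm]
  rw [zyQ_symm]
  rfl

theorem zyQ_entropy_copy0 {S : Type*} [Fintype S] [DecidableEq S] {p : Ω → ℝ}
    (hp : ∀ ω, 0 ≤ p ω) (F : Ω → V) (X : Ω → S) :
    shannonEntropy (zyQ p F) (fun w => X w.2) = shannonEntropy p X := by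
  have h1 : shannonEntropy (zyQ p F) (fun w => X w.1)
      = shannonEntropy (zyQ p F) (fun w => X w.2) :=
    zyQ_entropy_swap p F (fun w => X w.2)
  rw [← h1]
  exact zyQ_entropy_fst hp F X

theorem zyQ_entropy_copy {S T : Type*} [Fintype S] [DecidableEq S] [Fintype T] [DecidableEq T]
    {p : Ω → ℝ} (hp : ∀ ω, 0 ≤ p ω) (F : Ω → V) (X : Ω → S) (G : V → T) :
    shannonEntropy (zyQ p F) (fun w => (X w.2, G (F w.1)))
      = shannonEntropy p (fun ω => (X ω, G (F ω))) := by
  have h1 : shannonEntropy (zyQ p F) (fun w => (X w.1, G (F w.2)))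
      = shannonEntropy (zyQ p F) (fun w => (X w.2, G (F w.1))) :=
    zyQ_entropy_swap p F (fun w => (X w.2, G (F w.1)))
  rw [← h1]
  have h2 : shannonEntropy (zyQ p F) (fun w => (X w.1, G (F w.2)))
      = shannonEntropy (zyQ p F) (fun w => (X w.1, G (F w.1))) := by
    refine (zyEntropy_congr fun st => ?_).symm
    unfold zyPr
    refine Finset.sum_congr rfl fun w _ => ?_
    unfold zyQ
    dsimp only
    by_cases h : F w.2 = F w.1
    · simp [h]
    · simp [h]
  rw [h2]
  exact zyQ_entropy_fst hp F (fun ω => (X ω, G (F ω)))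

theorem zyQ_pr_cond {S T : Type*} [DecidableEq S] [DecidableEq T] (p : Ω → ℝ)
    (F : Ω → V) (X : Ω → S) (W : Ω → T) (G : T → V) (hWG : ∀ ω, G (W ω) = F ω)
    (s : S) (t : T) :
    zyPr (zyQ p F) (fun w => (X w.2, W w.1)) (s, t)
      = zyPr p W t * (zyPr p (fun ω => (X ω, F ω)) (s, G t) / zyPr p F (G t)) := by
  have key : ∀ a : Ω, (∑ b : Ω,
        if (fun w : Ω × Ω => (X w.2, W w.1)) (a, b) = (s, t) then zyQ p F (a, b) else 0)
      = (if W a = t then p a else 0)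
          * (zyPr p (fun ω => (X ω, F ω)) (s, G t) / zyPr p F (G t)) := by
    intro a
    by_cases hw : W a = t
    · have hFa : F a = G t := by rw [← hWG a, hw]
      rw [if_pos hw]
      rw [Finset.sum_congr rfl fun b (_ : b ∈ Finset.univ) => show
          (if (fun w : Ω × Ω => (X w.2, W w.1)) (a, b) = (s, t) then zyQ p F (a, b) else 0)
            = p a * (if (X b, F b) = (s, G t) then p b else 0) / zyPr p F (G t) from by
        unfold zyQ
        dsimp only
        rw [hFa]
        by_cases hx : X b = s <;> by_cases hf : F b = G t <;>
          simp [hx, hf, hw, Prod.ext_iff] <;> ring]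
      rw [← Finset.sum_div, ← Finset.mul_sum]
      have hd : (∑ b : Ω, if (X b, F b) = (s, G t) then p b else 0)
          = zyPr p (fun ω => (X ω, F ω)) (s, G t) := rfl
      rw [hd, mul_div_assoc]
    · rw [if_neg hw, zero_mul]
      refine Finset.sum_eq_zero fun b _ => ?_
      rw [if_neg]
      simp [Prod.ext_iff, hw]
  show (∑ w : Ω × Ω, if (X w.2, W w.1) = (s, t) then zyQ p F w else 0) = _
  rw [Fintype.sum_prod_type]
  rw [Finset.sum_congr rfl fun a _ => key a]
  rw [← Finset.sum_mul]
  rfl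

theorem zyNegMulLog_split (x y z : ℝ) : Real.negMulLog (x * (y / z))
    = -(x * (y / z)) * Real.log x - (x * (y / z)) * Real.log y
      + (x * (y / z)) * Real.log z := by
  rcases eq_or_ne x 0 with hx | hx
  · simp [hx, Real.negMulLog]
  rcases eq_or_ne y 0 with hy | hy
  · simp [hy, Real.negMulLog]
  rcases eq_or_ne z 0 with hz | hz
  · simp [hz, Real.negMulLog]
  rw [Real.negMulLog, Real.log_mul hx (div_ne_zero hy hz), Real.log_div hy hz]
  ring

theorem zyQ_entropy_cond {V S T : Type*} [Fintype V] [DecidableEq V] [Fintype S] [DecidableEq S]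
    [Fintype T] [DecidableEq T] {p : Ω → ℝ} (hp : ∀ ω, 0 ≤ p ω) (F : Ω → V)
    (X : Ω → S) (W : Ω → T) (G : T → V) (hWG : ∀ ω, G (W ω) = F ω) :
    shannonEntropy (zyQ p F) (fun w => (X w.2, W w.1))
      = shannonEntropy p W + shannonEntropy p (fun ω => (X ω, F ω)) - shannonEntropy p F := by
  have hbc : ∀ t, zyPr p W t ≤ zyPr p F (G t) :=
    fun t => zyPr_le hp fun ω h => by rw [← hWG ω, h]
  have hdc : ∀ s v, zyPr p (fun ω => (X ω, F ω)) (s, v) ≤ zyPr p F v :=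
    fun s v => zyPr_le hp fun ω h => by
      simp only [Prod.mk.injEq] at h; exact h.2
  have hb0 : ∀ t, zyPr p F (G t) = 0 → zyPr p W t = 0 :=
    fun t h => le_antisymm (h ▸ hbc t) (zyPr_nonneg hp W t)
  have hd0 : ∀ s v, zyPr p F v = 0 → zyPr p (fun ω => (X ω, F ω)) (s, v) = 0 :=
    fun s v h => le_antisymm (h ▸ hdc s v) (zyPr_nonneg hp _ _)
  -- marginal : ∑ s, d (s,v) = c v
  have hmarg : ∀ v, ∑ s : S, zyPr p (fun ω => (X ω, F ω)) (s, v) = zyPr p F v :=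
    fun v => zyPr_marg_fst2 p X F v
  have hH : shannonEntropy (zyQ p F) (fun w => (X w.2, W w.1))
      = ∑ s : S, ∑ t : T, Real.negMulLog (zyPr p W t
          * (zyPr p (fun ω => (X ω, F ω)) (s, G t) / zyPr p F (G t))) := by
    rw [zyEntropy_eq, Fintype.sum_prod_type]
    exact Finset.sum_congr rfl fun s _ => Finset.sum_congr rfl fun t _ => by
      rw [zyQ_pr_cond p F X W G hWG s t]
  rw [hH]
  rw [Finset.sum_congr rfl fun s (_ : s ∈ Finset.univ) => Finset.sum_congr rfl
    fun t (_ : t ∈ Finset.univ) => zyNegMulLog_split (zyPr p W t)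
      (zyPr p (fun ω => (X ω, F ω)) (s, G t)) (zyPr p F (G t))]
  simp only [neg_mul, sub_eq_add_neg, Finset.sum_add_distrib, Finset.sum_neg_distrib]
  -- Three sums
  have Sb : ∑ s : S, ∑ t : T, zyPr p W t
        * (zyPr p (fun ω => (X ω, F ω)) (s, G t) / zyPr p F (G t)) * Real.log (zyPr p W t)
      = ∑ t : T, zyPr p W t * Real.log (zyPr p W t) := by
    rw [Finset.sum_comm]
    refine Finset.sum_congr rfl fun t _ => ?_
    rw [Finset.sum_congr rfl fun s (_ : s ∈ Finset.univ) => show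
        zyPr p W t * (zyPr p (fun ω => (X ω, F ω)) (s, G t) / zyPr p F (G t))
            * Real.log (zyPr p W t)
          = zyPr p W t * Real.log (zyPr p W t) * zyPr p (fun ω => (X ω, F ω)) (s, G t)
            / zyPr p F (G t) from by ring]
    rw [← Finset.sum_div, ← Finset.mul_sum, hmarg (G t)]
    rcases eq_or_ne (zyPr p F (G t)) 0 with h | h
    · rw [h, hb0 t h]
      simp
    · rw [mul_div_assoc, div_self h, mul_one]
  have Sc : ∑ s : S, ∑ t : T, zyPr p W t
        * (zyPr p (fun ω => (X ω, F ω)) (s, G t) / zyPr p F (G t))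
          * Real.log (zyPr p F (G t))
      = ∑ v : V, zyPr p F v * Real.log (zyPr p F v) := by
    rw [Finset.sum_comm]
    have step : ∀ t, ∑ s : S, zyPr p W t
        * (zyPr p (fun ω => (X ω, F ω)) (s, G t) / zyPr p F (G t))
          * Real.log (zyPr p F (G t))
        = zyPr p W t * Real.log (zyPr p F (G t)) := by
      intro t
      rw [Finset.sum_congr rfl fun s (_ : s ∈ Finset.univ) => show
          zyPr p W t * (zyPr p (fun ω => (X ω, F ω)) (s, G t) / zyPr p F (G t))
              * Real.log (zyPr p F (G t))
            = zyPr p W t * Real.log (zyPr p F (G t))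
              * zyPr p (fun ω => (X ω, F ω)) (s, G t) / zyPr p F (G t) from by ring]
      rw [← Finset.sum_div, ← Finset.mul_sum, hmarg (G t)]
      rcases eq_or_ne (zyPr p F (G t)) 0 with h | h
      · rw [h, hb0 t h]
        simp
      · rw [mul_div_assoc, div_self h, mul_one]
    rw [Finset.sum_congr rfl fun t _ => step t]
    rw [zyPr_mul_sum p W (fun t => Real.log (zyPr p F (G t)))]
    rw [Finset.sum_congr rfl fun ω (_ : ω ∈ Finset.univ) => show
        p ω * Real.log (zyPr p F (G (W ω))) = p ω * Real.log (zyPr p F (F ω)) from by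
      rw [hWG ω]]
    rw [← zyPr_mul_sum p F (fun v => Real.log (zyPr p F v))]
  have Sd : ∑ s : S, ∑ t : T, zyPr p W t
        * (zyPr p (fun ω => (X ω, F ω)) (s, G t) / zyPr p F (G t))
          * Real.log (zyPr p (fun ω => (X ω, F ω)) (s, G t))
      = ∑ s : S, ∑ v : V, zyPr p (fun ω => (X ω, F ω)) (s, v)
          * Real.log (zyPr p (fun ω => (X ω, F ω)) (s, v)) := by
    rw [Finset.sum_comm]
    have step : ∀ t, ∑ s : S, zyPr p W t
        * (zyPr p (fun ω => (X ω, F ω)) (s, G t) / zyPr p F (G t))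
          * Real.log (zyPr p (fun ω => (X ω, F ω)) (s, G t))
        = zyPr p W t * ((∑ s : S, zyPr p (fun ω => (X ω, F ω)) (s, G t)
            * Real.log (zyPr p (fun ω => (X ω, F ω)) (s, G t))) / zyPr p F (G t)) := by
      intro t
      rw [Finset.sum_congr rfl fun s (_ : s ∈ Finset.univ) => show
          zyPr p W t * (zyPr p (fun ω => (X ω, F ω)) (s, G t) / zyPr p F (G t))
              * Real.log (zyPr p (fun ω => (X ω, F ω)) (s, G t))
            = zyPr p W t * (zyPr p (fun ω => (X ω, F ω)) (s, G t)
                * Real.log (zyPr p (fun ω => (X ω, F ω)) (s, G t))) / zyPr p F (G t) from by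
        ring]
      rw [← Finset.sum_div, ← Finset.mul_sum, mul_div_assoc]
    rw [Finset.sum_congr rfl fun t _ => step t]
    rw [zyPr_mul_sum p W (fun t => (∑ s : S, zyPr p (fun ω => (X ω, F ω)) (s, G t)
        * Real.log (zyPr p (fun ω => (X ω, F ω)) (s, G t))) / zyPr p F (G t))]
    rw [Finset.sum_congr rfl fun ω (_ : ω ∈ Finset.univ) => show
        p ω * ((∑ s : S, zyPr p (fun ω' => (X ω', F ω')) (s, G (W ω))
            * Real.log (zyPr p (fun ω' => (X ω', F ω')) (s, G (W ω)))) / zyPr p F (G (W ω)))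
          = p ω * ((∑ s : S, zyPr p (fun ω' => (X ω', F ω')) (s, F ω)
            * Real.log (zyPr p (fun ω' => (X ω', F ω')) (s, F ω))) / zyPr p F (F ω)) from by
      rw [hWG ω]]
    rw [← zyPr_mul_sum p F (fun v => (∑ s : S, zyPr p (fun ω => (X ω, F ω)) (s, v)
        * Real.log (zyPr p (fun ω => (X ω, F ω)) (s, v))) / zyPr p F v)]
    have per : ∀ v : V, zyPr p F v * ((∑ s : S, zyPr p (fun ω => (X ω, F ω)) (s, v)
        * Real.log (zyPr p (fun ω => (X ω, F ω)) (s, v))) / zyPr p F v)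
        = ∑ s : S, zyPr p (fun ω => (X ω, F ω)) (s, v)
            * Real.log (zyPr p (fun ω => (X ω, F ω)) (s, v)) := by
      intro v
      rcases eq_or_ne (zyPr p F v) 0 with h | h
      · have hz : ∀ s : S, zyPr p (fun ω => (X ω, F ω)) (s, v)
            * Real.log (zyPr p (fun ω => (X ω, F ω)) (s, v)) = 0 := fun s => by
          rw [hd0 s v h]; simp
        rw [Finset.sum_congr rfl fun s _ => hz s, Finset.sum_const_zero]
        simp
      · rw [mul_comm, div_mul_cancel₀ _ h]
    rw [Finset.sum_congr rfl fun v _ => per v]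
    exact Finset.sum_comm
  have eW : shannonEntropy p W = -∑ t : T, zyPr p W t * Real.log (zyPr p W t) := by
    rw [zyEntropy_eq]
    simp [Real.negMulLog, neg_mul, Finset.sum_neg_distrib]
  have eF : shannonEntropy p F = -∑ v : V, zyPr p F v * Real.log (zyPr p F v) := by
    rw [zyEntropy_eq]
    simp [Real.negMulLog, neg_mul, Finset.sum_neg_distrib]
  have eXF : shannonEntropy p (fun ω => (X ω, F ω))
      = -∑ s : S, ∑ v : V, zyPr p (fun ω => (X ω, F ω)) (s, v)
          * Real.log (zyPr p (fun ω => (X ω, F ω)) (s, v)) := by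
    rw [zyEntropy_eq, Fintype.sum_prod_type]
    simp [Real.negMulLog, neg_mul, Finset.sum_neg_distrib]
  rw [Sb, Sc, Sd, eW, eXF, eF]
  ring

end zyQ

end ZYAux

set_option maxHeartbeats 2000000 in
theorem stmt_17 {Ω S₁ S₂ S₃ S₄ : Type*} [Fintype Ω]
    [Fintype S₁] [Fintype S₂] [Fintype S₃] [Fintype S₄]
    [DecidableEq S₁] [DecidableEq S₂] [DecidableEq S₃] [DecidableEq S₄]
    (p : Ω → ℝ) (hp : ∀ ω, 0 ≤ p ω) (hp1 : ∑ ω, p ω = 1)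
    (X₁ : Ω → S₁) (X₂ : Ω → S₂) (X₃ : Ω → S₃) (X₄ : Ω → S₄) :
    2 * mutualInfo p X₃ X₄ ≤
      mutualInfo p X₁ X₂ + mutualInfo p X₁ (fun ω => (X₃ ω, X₄ ω)) +
        3 * condMutualInfo p X₃ X₄ X₁ + condMutualInfo p X₃ X₄ X₂ := by
  have hq0 : ∀ w, 0 ≤ zyQ p (fun ω => (X₃ ω, X₄ ω)) w :=
    zyQ_nonneg hp (fun ω => (X₃ ω, X₄ ω))
  -- Shannon inequalities on the auxiliary space
  have I1 : 0 ≤ condMutualInfo (zyQ p (fun ω => (X₃ ω, X₄ ω)))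
      (fun w => X₁ w.2) (fun w => X₁ w.1) (fun w => X₃ w.1) := zyCMI_nonneg hq0 _ _ _
  have I2 : 0 ≤ condMutualInfo (zyQ p (fun ω => (X₃ ω, X₄ ω)))
      (fun w => X₁ w.2) (fun w => X₁ w.1) (fun w => X₄ w.1) := zyCMI_nonneg hq0 _ _ _
  have I3 : 0 ≤ condMutualInfo (zyQ p (fun ω => (X₃ ω, X₄ ω)))
      (fun w => X₁ w.2) (fun w => X₂ w.1) (fun w => X₃ w.1) := zyCMI_nonneg hq0 _ _ _
  have I4 : 0 ≤ condMutualInfo (zyQ p (fun ω => (X₃ ω, X₄ ω)))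
      (fun w => X₁ w.2) (fun w => X₂ w.1) (fun w => X₄ w.1) := zyCMI_nonneg hq0 _ _ _
  have I5 : 0 ≤ condMutualInfo (zyQ p (fun ω => (X₃ ω, X₄ ω)))
      (fun w => X₁ w.2) (fun w => X₃ w.1) (fun w => (X₁ w.1, X₂ w.1)) :=
    zyCMI_nonneg hq0 _ _ _
  have I6 : 0 ≤ condMutualInfo (zyQ p (fun ω => (X₃ ω, X₄ ω)))
      (fun w => X₁ w.2) (fun w => X₄ w.1) (fun w => (X₁ w.1, X₂ w.1, X₃ w.1)) :=
    zyCMI_nonneg hq0 _ _ _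
  have I7 : 0 ≤ condMutualInfo (zyQ p (fun ω => (X₃ ω, X₄ ω)))
      (fun w => X₁ w.1) (fun w => X₂ w.1) (fun w => X₁ w.2) := zyCMI_nonneg hq0 _ _ _
  have I8 : 0 ≤ condMutualInfo (zyQ p (fun ω => (X₃ ω, X₄ ω)))
      (fun w => X₃ w.1) (fun w => X₄ w.1) (fun w => (X₁ w.2, X₁ w.1)) :=
    zyCMI_nonneg hq0 _ _ _
  have I9 : 0 ≤ condMutualInfo (zyQ p (fun ω => (X₃ ω, X₄ ω)))
      (fun w => X₃ w.1) (fun w => X₄ w.1) (fun w => (X₁ w.2, X₂ w.1)) :=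
    zyCMI_nonneg hq0 _ _ _
  -- marginal identities (variables through the first coordinate)
  have g3 : shannonEntropy (zyQ p (fun ω => (X₃ ω, X₄ ω))) (fun w => X₃ w.1)
      = shannonEntropy p X₃ := zyQ_entropy_fst hp _ X₃
  have g4 : shannonEntropy (zyQ p (fun ω => (X₃ ω, X₄ ω))) (fun w => X₄ w.1)
      = shannonEntropy p X₄ := zyQ_entropy_fst hp _ X₄
  have g13 : shannonEntropy (zyQ p (fun ω => (X₃ ω, X₄ ω))) (fun w => (X₁ w.1, X₃ w.1))
      = shannonEntropy p (fun ω => (X₁ ω, X₃ ω)) :=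
    zyQ_entropy_fst hp _ (fun ω => (X₁ ω, X₃ ω))
  have g14 : shannonEntropy (zyQ p (fun ω => (X₃ ω, X₄ ω))) (fun w => (X₁ w.1, X₄ w.1))
      = shannonEntropy p (fun ω => (X₁ ω, X₄ ω)) :=
    zyQ_entropy_fst hp _ (fun ω => (X₁ ω, X₄ ω))
  have g23 : shannonEntropy (zyQ p (fun ω => (X₃ ω, X₄ ω))) (fun w => (X₂ w.1, X₃ w.1))
      = shannonEntropy p (fun ω => (X₂ ω, X₃ ω)) :=
    zyQ_entropy_fst hp _ (fun ω => (X₂ ω, X₃ ω))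
  have g24 : shannonEntropy (zyQ p (fun ω => (X₃ ω, X₄ ω))) (fun w => (X₂ w.1, X₄ w.1))
      = shannonEntropy p (fun ω => (X₂ ω, X₄ ω)) :=
    zyQ_entropy_fst hp _ (fun ω => (X₂ ω, X₄ ω))
  have g12 : shannonEntropy (zyQ p (fun ω => (X₃ ω, X₄ ω))) (fun w => (X₁ w.1, X₂ w.1))
      = shannonEntropy p (fun ω => (X₁ ω, X₂ ω)) :=
    zyQ_entropy_fst hp _ (fun ω => (X₁ ω, X₂ ω))
  have g123 : shannonEntropy (zyQ p (fun ω => (X₃ ω, X₄ ω)))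
        (fun w => (X₁ w.1, X₂ w.1, X₃ w.1))
      = shannonEntropy p (fun ω => (X₁ ω, X₂ ω, X₃ ω)) :=
    zyQ_entropy_fst hp _ (fun ω => (X₁ ω, X₂ ω, X₃ ω))
  have g1234 : shannonEntropy (zyQ p (fun ω => (X₃ ω, X₄ ω)))
        (fun w => (X₄ w.1, X₁ w.1, X₂ w.1, X₃ w.1))
      = shannonEntropy p (fun ω => (X₄ ω, X₁ ω, X₂ ω, X₃ ω)) :=
    zyQ_entropy_fst hp _ (fun ω => (X₄ ω, X₁ ω, X₂ ω, X₃ ω))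
  -- copy identities (second coordinate is a conditional copy of X₁)
  have e0 : shannonEntropy (zyQ p (fun ω => (X₃ ω, X₄ ω))) (fun w => X₁ w.2)
      = shannonEntropy p X₁ := zyQ_entropy_copy0 hp _ X₁
  have e03 : shannonEntropy (zyQ p (fun ω => (X₃ ω, X₄ ω))) (fun w => (X₁ w.2, X₃ w.1))
      = shannonEntropy p (fun ω => (X₁ ω, X₃ ω)) :=
    zyQ_entropy_copy hp (fun ω => (X₃ ω, X₄ ω)) X₁ Prod.fst
  have e04 : shannonEntropy (zyQ p (fun ω => (X₃ ω, X₄ ω))) (fun w => (X₁ w.2, X₄ w.1))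
      = shannonEntropy p (fun ω => (X₁ ω, X₄ ω)) :=
    zyQ_entropy_copy hp (fun ω => (X₃ ω, X₄ ω)) X₁ Prod.snd
  -- conditional independence identities
  have c0134 : shannonEntropy (zyQ p (fun ω => (X₃ ω, X₄ ω)))
        (fun w => (X₁ w.2, X₁ w.1, X₃ w.1, X₄ w.1))
      = shannonEntropy p (fun ω => (X₁ ω, X₃ ω, X₄ ω))
        + shannonEntropy p (fun ω => (X₁ ω, X₃ ω, X₄ ω))
        - shannonEntropy p (fun ω => (X₃ ω, X₄ ω)) :=
    zyQ_entropy_cond hp (fun ω => (X₃ ω, X₄ ω)) X₁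
      (fun ω => (X₁ ω, X₃ ω, X₄ ω)) Prod.snd (fun ω => rfl)
  have c0234 : shannonEntropy (zyQ p (fun ω => (X₃ ω, X₄ ω)))
        (fun w => (X₁ w.2, X₂ w.1, X₃ w.1, X₄ w.1))
      = shannonEntropy p (fun ω => (X₂ ω, X₃ ω, X₄ ω))
        + shannonEntropy p (fun ω => (X₁ ω, X₃ ω, X₄ ω))
        - shannonEntropy p (fun ω => (X₃ ω, X₄ ω)) :=
    zyQ_entropy_cond hp (fun ω => (X₃ ω, X₄ ω)) X₁
      (fun ω => (X₂ ω, X₃ ω, X₄ ω)) Prod.snd (fun ω => rfl)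
  have c01234 : shannonEntropy (zyQ p (fun ω => (X₃ ω, X₄ ω)))
        (fun w => (X₁ w.2, X₁ w.1, X₂ w.1, X₃ w.1, X₄ w.1))
      = shannonEntropy p (fun ω => (X₁ ω, X₂ ω, X₃ ω, X₄ ω))
        + shannonEntropy p (fun ω => (X₁ ω, X₃ ω, X₄ ω))
        - shannonEntropy p (fun ω => (X₃ ω, X₄ ω)) :=
    zyQ_entropy_cond hp (fun ω => (X₃ ω, X₄ ω)) X₁
      (fun ω => (X₁ ω, X₂ ω, X₃ ω, X₄ ω)) (fun t => t.2.2) (fun ω => rfl)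
  -- permutation bridges on the auxiliary space
  have b1 : shannonEntropy (zyQ p (fun ω => (X₃ ω, X₄ ω))) (fun w => (X₁ w.1, X₁ w.2))
      = shannonEntropy (zyQ p (fun ω => (X₃ ω, X₄ ω))) (fun w => (X₁ w.2, X₁ w.1)) :=
    zyEntropy_comp_inj (zyQ p (fun ω => (X₃ ω, X₄ ω))) (fun w => (X₁ w.2, X₁ w.1)) (fun x => (x.2, x.1))
      (Function.LeftInverse.injective (g := fun x => (x.2, x.1)) fun x => rfl)
  have b2 : shannonEntropy (zyQ p (fun ω => (X₃ ω, X₄ ω))) (fun w => (X₂ w.1, X₁ w.2))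
      = shannonEntropy (zyQ p (fun ω => (X₃ ω, X₄ ω))) (fun w => (X₁ w.2, X₂ w.1)) :=
    zyEntropy_comp_inj (zyQ p (fun ω => (X₃ ω, X₄ ω))) (fun w => (X₁ w.2, X₂ w.1)) (fun x => (x.2, x.1))
      (Function.LeftInverse.injective (g := fun x => (x.2, x.1)) fun x => rfl)
  have b3 : shannonEntropy (zyQ p (fun ω => (X₃ ω, X₄ ω)))
        (fun w => (X₁ w.1, X₂ w.1, X₁ w.2))
      = shannonEntropy (zyQ p (fun ω => (X₃ ω, X₄ ω)))
        (fun w => (X₁ w.2, X₁ w.1, X₂ w.1)) :=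
    zyEntropy_comp_inj (zyQ p (fun ω => (X₃ ω, X₄ ω))) (fun w => (X₁ w.2, X₁ w.1, X₂ w.1))
      (fun x => (x.2.1, x.2.2, x.1))
      (Function.LeftInverse.injective (g := fun x => (x.2.2, x.1, x.2.1)) fun x => rfl)
  have b4 : shannonEntropy (zyQ p (fun ω => (X₃ ω, X₄ ω)))
        (fun w => (X₃ w.1, X₁ w.2, X₁ w.1))
      = shannonEntropy (zyQ p (fun ω => (X₃ ω, X₄ ω)))
        (fun w => (X₁ w.2, X₁ w.1, X₃ w.1)) :=
    zyEntropy_comp_inj (zyQ p (fun ω => (X₃ ω, X₄ ω))) (fun w => (X₁ w.2, X₁ w.1, X₃ w.1))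
      (fun x => (x.2.2, x.1, x.2.1))
      (Function.LeftInverse.injective (g := fun x => (x.2.1, x.2.2, x.1)) fun x => rfl)
  have b5 : shannonEntropy (zyQ p (fun ω => (X₃ ω, X₄ ω)))
        (fun w => (X₄ w.1, X₁ w.2, X₁ w.1))
      = shannonEntropy (zyQ p (fun ω => (X₃ ω, X₄ ω)))
        (fun w => (X₁ w.2, X₁ w.1, X₄ w.1)) :=
    zyEntropy_comp_inj (zyQ p (fun ω => (X₃ ω, X₄ ω))) (fun w => (X₁ w.2, X₁ w.1, X₄ w.1))
      (fun x => (x.2.2, x.1, x.2.1))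
      (Function.LeftInverse.injective (g := fun x => (x.2.1, x.2.2, x.1)) fun x => rfl)
  have b6 : shannonEntropy (zyQ p (fun ω => (X₃ ω, X₄ ω)))
        (fun w => (X₃ w.1, X₁ w.2, X₂ w.1))
      = shannonEntropy (zyQ p (fun ω => (X₃ ω, X₄ ω)))
        (fun w => (X₁ w.2, X₂ w.1, X₃ w.1)) :=
    zyEntropy_comp_inj (zyQ p (fun ω => (X₃ ω, X₄ ω))) (fun w => (X₁ w.2, X₂ w.1, X₃ w.1))
      (fun x => (x.2.2, x.1, x.2.1))
      (Function.LeftInverse.injective (g := fun x => (x.2.1, x.2.2, x.1)) fun x => rfl)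
  have b7 : shannonEntropy (zyQ p (fun ω => (X₃ ω, X₄ ω)))
        (fun w => (X₄ w.1, X₁ w.2, X₂ w.1))
      = shannonEntropy (zyQ p (fun ω => (X₃ ω, X₄ ω)))
        (fun w => (X₁ w.2, X₂ w.1, X₄ w.1)) :=
    zyEntropy_comp_inj (zyQ p (fun ω => (X₃ ω, X₄ ω))) (fun w => (X₁ w.2, X₂ w.1, X₄ w.1))
      (fun x => (x.2.2, x.1, x.2.1))
      (Function.LeftInverse.injective (g := fun x => (x.2.1, x.2.2, x.1)) fun x => rfl)
  have b8 : shannonEntropy (zyQ p (fun ω => (X₃ ω, X₄ ω)))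
        (fun w => (X₃ w.1, X₁ w.1, X₂ w.1))
      = shannonEntropy (zyQ p (fun ω => (X₃ ω, X₄ ω)))
        (fun w => (X₁ w.1, X₂ w.1, X₃ w.1)) :=
    zyEntropy_comp_inj (zyQ p (fun ω => (X₃ ω, X₄ ω))) (fun w => (X₁ w.1, X₂ w.1, X₃ w.1))
      (fun x => (x.2.2, x.1, x.2.1))
      (Function.LeftInverse.injective (g := fun x => (x.2.1, x.2.2, x.1)) fun x => rfl)
  have b9 : shannonEntropy (zyQ p (fun ω => (X₃ ω, X₄ ω)))
        (fun w => (X₁ w.2, X₃ w.1, X₁ w.1, X₂ w.1))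
      = shannonEntropy (zyQ p (fun ω => (X₃ ω, X₄ ω)))
        (fun w => (X₁ w.2, X₁ w.1, X₂ w.1, X₃ w.1)) :=
    zyEntropy_comp_inj (zyQ p (fun ω => (X₃ ω, X₄ ω))) (fun w => (X₁ w.2, X₁ w.1, X₂ w.1, X₃ w.1))
      (fun x => (x.1, x.2.2.2, x.2.1, x.2.2.1))
      (Function.LeftInverse.injective
        (g := fun x => (x.1, x.2.2.1, x.2.2.2, x.2.1)) fun x => rfl)
  have b10 : shannonEntropy (zyQ p (fun ω => (X₃ ω, X₄ ω)))
        (fun w => (X₃ w.1, X₄ w.1, X₁ w.2, X₁ w.1))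
      = shannonEntropy (zyQ p (fun ω => (X₃ ω, X₄ ω)))
        (fun w => (X₁ w.2, X₁ w.1, X₃ w.1, X₄ w.1)) :=
    zyEntropy_comp_inj (zyQ p (fun ω => (X₃ ω, X₄ ω))) (fun w => (X₁ w.2, X₁ w.1, X₃ w.1, X₄ w.1))
      (fun x => (x.2.2.1, x.2.2.2, x.1, x.2.1))
      (Function.LeftInverse.injective
        (g := fun x => (x.2.2.1, x.2.2.2, x.1, x.2.1)) fun x => rfl)
  have b11 : shannonEntropy (zyQ p (fun ω => (X₃ ω, X₄ ω)))
        (fun w => (X₃ w.1, X₄ w.1, X₁ w.2, X₂ w.1))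
      = shannonEntropy (zyQ p (fun ω => (X₃ ω, X₄ ω)))
        (fun w => (X₁ w.2, X₂ w.1, X₃ w.1, X₄ w.1)) :=
    zyEntropy_comp_inj (zyQ p (fun ω => (X₃ ω, X₄ ω))) (fun w => (X₁ w.2, X₂ w.1, X₃ w.1, X₄ w.1))
      (fun x => (x.2.2.1, x.2.2.2, x.1, x.2.1))
      (Function.LeftInverse.injective
        (g := fun x => (x.2.2.1, x.2.2.2, x.1, x.2.1)) fun x => rfl)
  have b12 : shannonEntropy (zyQ p (fun ω => (X₃ ω, X₄ ω)))
        (fun w => (X₁ w.2, X₄ w.1, X₁ w.1, X₂ w.1, X₃ w.1))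
      = shannonEntropy (zyQ p (fun ω => (X₃ ω, X₄ ω)))
        (fun w => (X₁ w.2, X₁ w.1, X₂ w.1, X₃ w.1, X₄ w.1)) :=
    zyEntropy_comp_inj (zyQ p (fun ω => (X₃ ω, X₄ ω))) (fun w => (X₁ w.2, X₁ w.1, X₂ w.1, X₃ w.1, X₄ w.1))
      (fun x => (x.1, x.2.2.2.2, x.2.1, x.2.2.1, x.2.2.2.1))
      (Function.LeftInverse.injective
        (g := fun x => (x.1, x.2.2.1, x.2.2.2.1, x.2.2.2.2, x.2.1)) fun x => rfl)
  -- permutation bridges on the base space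
  have pb1 : shannonEntropy p (fun ω => (X₃ ω, X₁ ω))
      = shannonEntropy p (fun ω => (X₁ ω, X₃ ω)) :=
    zyEntropy_comp_inj p (fun ω => (X₁ ω, X₃ ω)) (fun x => (x.2, x.1))
      (Function.LeftInverse.injective (g := fun x => (x.2, x.1)) fun x => rfl)
  have pb2 : shannonEntropy p (fun ω => (X₄ ω, X₁ ω))
      = shannonEntropy p (fun ω => (X₁ ω, X₄ ω)) :=
    zyEntropy_comp_inj p (fun ω => (X₁ ω, X₄ ω)) (fun x => (x.2, x.1))
      (Function.LeftInverse.injective (g := fun x => (x.2, x.1)) fun x => rfl)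
  have pb3 : shannonEntropy p (fun ω => (X₃ ω, X₂ ω))
      = shannonEntropy p (fun ω => (X₂ ω, X₃ ω)) :=
    zyEntropy_comp_inj p (fun ω => (X₂ ω, X₃ ω)) (fun x => (x.2, x.1))
      (Function.LeftInverse.injective (g := fun x => (x.2, x.1)) fun x => rfl)
  have pb4 : shannonEntropy p (fun ω => (X₄ ω, X₂ ω))
      = shannonEntropy p (fun ω => (X₂ ω, X₄ ω)) :=
    zyEntropy_comp_inj p (fun ω => (X₂ ω, X₄ ω)) (fun x => (x.2, x.1))
      (Function.LeftInverse.injective (g := fun x => (x.2, x.1)) fun x => rfl)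
  have pb5 : shannonEntropy p (fun ω => (X₃ ω, X₄ ω, X₂ ω))
      = shannonEntropy p (fun ω => (X₂ ω, X₃ ω, X₄ ω)) :=
    zyEntropy_comp_inj p (fun ω => (X₂ ω, X₃ ω, X₄ ω))
      (fun x => (x.2.1, x.2.2, x.1))
      (Function.LeftInverse.injective (g := fun x => (x.2.2, x.1, x.2.1)) fun x => rfl)
  have pb6 : shannonEntropy p (fun ω => (X₃ ω, X₄ ω, X₁ ω))
      = shannonEntropy p (fun ω => (X₁ ω, X₃ ω, X₄ ω)) :=
    zyEntropy_comp_inj p (fun ω => (X₁ ω, X₃ ω, X₄ ω))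
      (fun x => (x.2.1, x.2.2, x.1))
      (Function.LeftInverse.injective (g := fun x => (x.2.2, x.1, x.2.1)) fun x => rfl)
  have pb7 : shannonEntropy p (fun ω => (X₄ ω, X₁ ω, X₂ ω, X₃ ω))
      = shannonEntropy p (fun ω => (X₁ ω, X₂ ω, X₃ ω, X₄ ω)) :=
    zyEntropy_comp_inj p (fun ω => (X₁ ω, X₂ ω, X₃ ω, X₄ ω))
      (fun x => (x.2.2.2, x.1, x.2.1, x.2.2.1))
      (Function.LeftInverse.injective
        (g := fun x => (x.2.1, x.2.2.1, x.2.2.2, x.1)) fun x => rfl)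
  simp only [condMutualInfo] at I1 I2 I3 I4 I5 I6 I7 I8 I9
  simp only [mutualInfo, condMutualInfo]
  linarith [I1, I2, I3, I4, I5, I6, I7, I8, I9, g3, g4, g13, g14, g23, g24, g12, g123,
    g1234, e0, e03, e04, c0134, c0234, c01234, b1, b2, b3, b4, b5, b6, b7, b8, b9, b10,
    b11, b12, pb1, pb2, pb3, pb4, pb5, pb6, pb7]
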